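/- Let k ≥ 2 be an integer. For all sufficiently large Δ > 0 there exist ε > 0, C > 0, and η₀ > 0 such that for all z = η + iy with 0 < η ≤ η₀ and Δ·η ≤ |y| ≤ π, |ξ_k(e^{−z})| ≤ C · ξ_k(e^{−η}) · e^{−ε/η}. -/

import Mathlib

set_option maxHeartbeats 1000000

open scoped Real

/-- Geometric-sum form of each factor. -/
lemma auxGeom (k : ℕ) {q : ℂ} (hq : ‖q‖ < 1) (m : ℕ) (hm : 1 ≤ m) :
    (1 - q ^ (m * k)) / (1 - q ^ m) = ∑ j ∈ Finset.range k, (q ^ m) ^ j := by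
  have h1 : q ^ m ≠ 1 := by
    intro h
    have : ‖q ^ m‖ < 1 := by
      rw [norm_pow]
      exact pow_lt_one₀ (norm_nonneg q) hq (by omega)
    rw [h] at this; simp at this
  rw [geom_sum_eq h1, pow_mul]
  rw [← neg_sub (q ^ m) 1, ← neg_sub ((q ^ m) ^ k) 1, neg_div_neg_eq]

lemma auxNe (k : ℕ) (hk : 2 ≤ k) {q : ℂ} (hq : ‖q‖ < 1) (m : ℕ) (hm : 1 ≤ m) :
    (1 - q ^ (m * k)) / (1 - q ^ m) ≠ 0 := by
  have key : ∀ l : ℕ, 1 ≤ l → (1 : ℂ) - q ^ l ≠ 0 := by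
    intro l hl h
    have h1 : q ^ l = 1 := (sub_eq_zero.mp h).symm
    have : ‖q ^ l‖ < 1 := by
      rw [norm_pow]
      exact pow_lt_one₀ (norm_nonneg q) hq (by omega)
    rw [h1] at this; simp at this
  have hmk : 1 ≤ m * k := Nat.one_le_iff_ne_zero.mpr (by positivity)
  exact div_ne_zero (key _ hmk) (key _ hm)

/-- The factors form a multipliable family for `|q| < 1`. -/
lemma auxMult (k : ℕ) (hk : 2 ≤ k) {q : ℂ} (hq : ‖q‖ < 1) :
    Multipliable (fun n : ℕ => ∑ j ∈ Finset.range k, (q ^ (n + 1)) ^ j) := by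
  set t := ‖q‖ with htdef
  have ht0 : 0 ≤ t := norm_nonneg q
  set F : ℕ → ℂ := fun n => ∑ j ∈ Finset.range k, (q ^ (n + 1)) ^ j with hF
  have hne : ∀ n, F n ≠ 0 := by
    intro n
    rw [hF]
    simp only
    rw [← auxGeom k hq (n + 1) (by omega)]
    exact auxNe k hk hq (n + 1) (by omega)
  have hq1 : ∀ n : ℕ, t ^ (n + 1) ≤ 1 := fun n => pow_le_one₀ ht0 hq.le
  have hbound : ∀ n, ‖F n - 1‖ ≤ (k - 1 : ℝ) * t ^ (n + 1) := by
    intro n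
    have hsplit : F n = 1 + ∑ j ∈ Finset.Ico 1 k, (q ^ (n + 1)) ^ j := by
      rw [hF]
      simp only
      rw [← Finset.sum_range_add_sum_Ico _ (show 1 ≤ k by omega)]
      simp
    rw [hsplit, add_sub_cancel_left]
    calc ‖∑ j ∈ Finset.Ico 1 k, (q ^ (n + 1)) ^ j‖
        ≤ ∑ j ∈ Finset.Ico 1 k, ‖(q ^ (n + 1)) ^ j‖ := norm_sum_le _ _
      _ ≤ ∑ _j ∈ Finset.Ico 1 k, t ^ (n + 1) := by
          apply Finset.sum_le_sum
          intro j hj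
          rw [Finset.mem_Ico] at hj
          have h1 : ‖(q ^ (n + 1)) ^ j‖ = (t ^ (n + 1)) ^ j := by
            rw [norm_pow, norm_pow, htdef]
          rw [h1]
          calc (t ^ (n + 1)) ^ j ≤ (t ^ (n + 1)) ^ 1 :=
                pow_le_pow_of_le_one (by positivity) (hq1 n) hj.1
            _ = t ^ (n + 1) := pow_one _
      _ = (k - 1 : ℝ) * t ^ (n + 1) := by
          rw [Finset.sum_const, Nat.card_Ico, nsmul_eq_mul]
          congr 1
          push_cast [Nat.cast_sub (show 1 ≤ k by omega)]
          ring
  have htend : Filter.Tendsto (fun n : ℕ => (k - 1 : ℝ) * t ^ (n + 1)) Filter.atTop (nhds 0) := by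
    have h0 := tendsto_pow_atTop_nhds_zero_of_lt_one ht0 hq
    have h1 := (h0.comp (Filter.tendsto_add_atTop_nat 1)).const_mul ((k : ℝ) - 1)
    simpa using h1
  have hev : ∀ᶠ n in Filter.atTop,
      ‖Complex.log (F n)‖ ≤ (3 / 2) * ((k - 1 : ℝ) * t ^ (n + 1)) := by
    filter_upwards [htend.eventually_le_const (show (0:ℝ) < 1/2 by norm_num)] with n hn
    have h1 : ‖F n - 1‖ ≤ 1 / 2 := (hbound n).trans hn
    have h2 := Complex.norm_log_one_add_half_le_self h1
    have h3 : (1 : ℂ) + (F n - 1) = F n := by ring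
    rw [h3] at h2
    calc ‖Complex.log (F n)‖ ≤ 3 / 2 * ‖F n - 1‖ := h2
      _ ≤ 3 / 2 * ((k - 1 : ℝ) * t ^ (n + 1)) := by
          have := hbound n
          linarith
  have hsum : Summable fun n : ℕ => Complex.log (F n) := by
    apply Summable.of_norm_bounded_eventually_nat ?_ hev
    have hg : Summable fun n : ℕ => t ^ (n + 1) := by
      have := summable_geometric_of_lt_one ht0 hq
      exact (this.mul_left t).congr fun n => by rw [pow_succ, mul_comm]
    exact (hg.mul_left ((k - 1 : ℝ))).mul_left (3 / 2) |>.congr fun n => by ring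
  exact Complex.multipliable_of_summable_log hsum

/-- Key pointwise estimate: the modulus of a geometric sum is at most the sum of the
moduli minus half the "deficiency" `|w| - Re w` of the linear term. -/
lemma auxSumBound (k : ℕ) (hk : 2 ≤ k) {w : ℂ} (hw : ‖w‖ ≤ 1) :
    ‖∑ j ∈ Finset.range k, w ^ j‖ ≤
      (∑ j ∈ Finset.range k, (‖w‖) ^ j) - (‖w‖ - w.re) / 2 := by
  set t := ‖w‖ with ht
  have ht0 : 0 ≤ t := norm_nonneg w
  have hre : w.re ≤ t := Complex.re_le_norm w
  have hre' : -t ≤ w.re := by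
    have := Complex.abs_re_le_norm w
    cases abs_le.mp this with
    | intro a b => linarith
  set D := t - w.re with hD
  have hD0 : 0 ≤ D := by simp [hD]; linarith
  have hD2 : D ≤ 2 := by simp [hD]; nlinarith
  have hsq : (‖1 + w‖) ^ 2 = 1 + 2 * w.re + t ^ 2 := by
    rw [Complex.sq_norm, Complex.normSq_apply]
    have : t ^ 2 = w.re ^ 2 + w.im ^ 2 := by
      rw [ht, Complex.sq_norm, Complex.normSq_apply]; ring
    simp [Complex.add_re, Complex.add_im]
    nlinarith [this]
  have h1w : ‖1 + w‖ ≤ 1 + t - D / 2 := by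
    have hrhs : 0 ≤ 1 + t - D / 2 := by linarith
    nlinarith [norm_nonneg (1 + w), hsq]
  have hsplit : ∑ j ∈ Finset.range k, w ^ j
      = (1 + w) + ∑ j ∈ Finset.Ico 2 k, w ^ j := by
    rw [← Finset.sum_range_add_sum_Ico _ hk]
    congr 1
    simp [Finset.sum_range_succ]
  have hsplit' : ∑ j ∈ Finset.range k, t ^ j
      = (1 + t) + ∑ j ∈ Finset.Ico 2 k, t ^ j := by
    rw [← Finset.sum_range_add_sum_Ico _ hk]
    congr 1
    simp [Finset.sum_range_succ]
  rw [hsplit, hsplit']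
  calc ‖(1 + w) + ∑ j ∈ Finset.Ico 2 k, w ^ j‖
      ≤ ‖1 + w‖ + ‖∑ j ∈ Finset.Ico 2 k, w ^ j‖ :=
        norm_add_le _ _
    _ ≤ (1 + t - D / 2) + ∑ j ∈ Finset.Ico 2 k, t ^ j := by
        gcongr
        calc ‖∑ j ∈ Finset.Ico 2 k, w ^ j‖
            ≤ ∑ j ∈ Finset.Ico 2 k, ‖w ^ j‖ := by
              exact norm_sum_le _ _
          _ = ∑ j ∈ Finset.Ico 2 k, t ^ j := by
              simp [norm_pow, ht]
    _ = ((1 + t) + ∑ j ∈ Finset.Ico 2 k, t ^ j) - D / 2 := by ring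

/-- An exponential-sum estimate: `∑_{m=1}^M cos (m y) ≤ π / |y|` for `0 < |y| ≤ π`. -/
lemma auxCosSum {y : ℝ} (hy0 : y ≠ 0) (hy : |y| ≤ π) (M : ℕ) :
    ∑ n ∈ Finset.range M, Real.cos ((n + 1) * y) ≤ π / |y| := by
  set c : ℂ := Complex.exp (y * Complex.I) with hc
  have hcre : c.re = Real.cos y := by
    simp [hc, Complex.exp_re]
  have hcim : c.im = Real.sin y := by
    simp [hc, Complex.exp_im]
  have habs : ‖c‖ = 1 := by
    simp [hc, Complex.norm_exp]
  have hcos : Real.cos y ≤ 1 - 2 / π ^ 2 * y ^ 2 := Real.cos_le_one_sub_mul_cos_sq hy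
  have hsq : (‖c - 1‖) ^ 2 = 2 - 2 * Real.cos y := by
    rw [Complex.sq_norm, Complex.normSq_apply]
    simp [Complex.sub_re, Complex.sub_im, hcre, hcim]
    nlinarith [Real.sin_sq_add_cos_sq y]
  have hy2 : 0 < |y| := abs_pos.mpr hy0
  have hpi : (0:ℝ) < π := Real.pi_pos
  have hlow : 2 * |y| / π ≤ ‖c - 1‖ := by
    have h1 : (2 * |y| / π) ^ 2 ≤ (‖c - 1‖) ^ 2 := by
      rw [hsq]
      have : (2 * |y| / π)^2 = 4 * y^2 / π^2 := by
        rw [div_pow]; rw [mul_pow]; rw [sq_abs]; ring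
      rw [this]
      have h2 : 4 * y ^ 2 / π ^ 2 ≤ 2 * (2 / π ^ 2 * y ^ 2) := by
        rw [mul_comm]
        rw [div_eq_mul_inv]
        ring_nf
        nlinarith [sq_nonneg y, sq_nonneg π]
      nlinarith
    have h2 : 0 ≤ 2 * |y| / π := by positivity
    nlinarith [norm_nonneg (c - 1)]
  have hcne : c ≠ 1 := by
    intro h
    rw [h] at hlow
    simp at hlow
    have : 0 < 2 * |y| / π := by positivity
    linarith
  have hterm : ∀ n : ℕ, Real.cos ((n + 1) * y) = (c ^ (n + 1)).re := by
    intro n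
    have : c ^ (n + 1) = Complex.exp ((((n:ℕ) + 1 : ℕ) : ℂ) * (y * Complex.I)) := by
      rw [Complex.exp_nat_mul]
    rw [this, Complex.exp_re]
    push_cast
    simp [Complex.mul_re, Complex.mul_im]
  have hsum : ∑ n ∈ Finset.range M, Real.cos ((n + 1) * y)
      = (∑ n ∈ Finset.range M, c ^ (n + 1)).re := by
    rw [Complex.re_sum]
    exact Finset.sum_congr rfl fun n _ => hterm n
  rw [hsum]
  calc (∑ n ∈ Finset.range M, c ^ (n + 1)).re
      ≤ ‖∑ n ∈ Finset.range M, c ^ (n + 1)‖ := Complex.re_le_norm _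
    _ = ‖c * ∑ n ∈ Finset.range M, c ^ n‖ := by
        rw [Finset.mul_sum]
        congr 1
        exact Finset.sum_congr rfl fun n _ => by rw [pow_succ, mul_comm]
    _ = ‖∑ n ∈ Finset.range M, c ^ n‖ := by
        rw [norm_mul, habs, one_mul]
    _ = ‖(c ^ M - 1) / (c - 1)‖ := by rw [geom_sum_eq hcne]
    _ ≤ 2 / (2 * |y| / π) := by
        rw [norm_div]
        apply div_le_div₀ (by positivity) ?_ (by positivity) hlow
        calc ‖c ^ M - 1‖ ≤ ‖c ^ M‖ + ‖(1 : ℂ)‖ := by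
              simpa [sub_eq_add_neg] using norm_add_le (c ^ M) (-1)
          _ ≤ 2 := by rw [norm_pow, habs]; norm_num
    _ = π / |y| := by
        field_simp

/-- Monotonicity of infinite products of nonnegative reals. -/
lemma auxTprodLe {a g : ℕ → ℝ} (h0 : ∀ n, 0 ≤ a n) (h : ∀ n, a n ≤ g n)
    (ha : Multipliable a) (hg : Multipliable g) : ∏' n, a n ≤ ∏' n, g n :=
  le_of_tendsto_of_tendsto' ha.hasProd.tendsto_prod_nat hg.hasProd.tendsto_prod_nat fun s =>
    Finset.prod_le_prod (fun i _ => h0 i) (fun i _ => h i)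

/-- The generating function `ξ_k(q) = ∏_{n ≥ 1} (1 - q^{nk})/(1 - q^n)` of
`k`-indivisible partitions. -/
noncomputable def xiK (k : ℕ) (q : ℂ) : ℂ :=
  ∏' n : ℕ, (1 - q ^ ((n + 1) * k)) / (1 - q ^ (n + 1))

theorem stmt14 (k : ℕ) (hk : 2 ≤ k) :
    ∃ Δ₀ > (0 : ℝ), ∀ Δ ≥ Δ₀, ∃ ε > (0 : ℝ), ∃ C > (0 : ℝ), ∃ η₀ > (0 : ℝ),
      ∀ z : ℂ, 0 < z.re → z.re ≤ η₀ → Δ * z.re ≤ |z.im| → |z.im| ≤ π →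
        ‖xiK k (Complex.exp (-z))‖ ≤
          C * ‖xiK k (Complex.exp (-(z.re : ℂ)))‖ * Real.exp (-ε / z.re) := by
  have hπ : (0 : ℝ) < π := Real.pi_pos
  have hk0 : (0 : ℝ) < k := by positivity
  refine ⟨4 * π, by positivity, fun Δ hΔ => ?_⟩
  refine ⟨1 / (12 * k), by positivity, 1, one_pos, 1 / 4, by norm_num, ?_⟩
  intro z hη hη4 hy1 hy2
  set η := z.re with hηdef
  set y := z.im with hydef
  have hΔ0 : (0 : ℝ) < Δ := lt_of_lt_of_le (by positivity) hΔ
  have hylb : 4 * π * η ≤ |y| := le_trans (by nlinarith) hy1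
  have habsy : 0 < |y| := lt_of_lt_of_le (by positivity) hylb
  have hy0 : y ≠ 0 := fun h => by simp [h] at habsy
  set q := Complex.exp (-z) with hqdef
  set qr := Complex.exp (-(η : ℂ)) with hqrdef
  set t := Real.exp (-η) with htdef
  have ht0 : 0 < t := Real.exp_pos _
  have ht1 : t < 1 := by rw [htdef, Real.exp_lt_one_iff]; linarith
  have habsq : ‖q‖ = t := by
    rw [hqdef, Complex.norm_exp]; simp [htdef, hηdef]
  have habsqr : ‖qr‖ = t := by
    rw [hqrdef, Complex.norm_exp]; simp [htdef]
  have hq1 : ‖q‖ < 1 := by rw [habsq]; exact ht1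
  have hqr1 : ‖qr‖ < 1 := by rw [habsqr]; exact ht1
  set F : ℕ → ℂ := fun n => ∑ j ∈ Finset.range k, (q ^ (n + 1)) ^ j with hFdef
  set G : ℕ → ℂ := fun n => ∑ j ∈ Finset.range k, (qr ^ (n + 1)) ^ j with hGdef
  have hxiq : xiK k q = ∏' n : ℕ, F n :=
    tprod_congr fun n => auxGeom k hq1 (n + 1) (by omega)
  have hxiqr : xiK k qr = ∏' n : ℕ, G n :=
    tprod_congr fun n => auxGeom k hqr1 (n + 1) (by omega)
  have hMF : Multipliable F := auxMult k hk hq1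
  have hMG : Multipliable G := auxMult k hk hqr1
  set b : ℕ → ℝ := fun n => ∑ j ∈ Finset.range k, (t ^ (n + 1)) ^ j with hbdef
  have hb0 : ∀ n, 0 ≤ b n := fun n => Finset.sum_nonneg fun j _ => by positivity
  have hqr_real : qr = ((t : ℝ) : ℂ) := by
    rw [hqrdef, htdef, Complex.ofReal_exp, Complex.ofReal_neg]
  have hGb : ∀ n, ‖G n‖ = b n := by
    intro n
    have h1 : G n = ((b n : ℝ) : ℂ) := by
      rw [hGdef, hbdef]
      push_cast [hqr_real]
      rfl
    rw [h1, Complex.norm_real, Real.norm_of_nonneg (hb0 n)]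
  have hbk : ∀ n, b n ≤ k := by
    intro n
    calc b n ≤ ∑ _j ∈ Finset.range k, (1 : ℝ) := by
          apply Finset.sum_le_sum
          intro j _
          exact pow_le_one₀ (by positivity) (pow_le_one₀ ht0.le ht1.le)
      _ = k := by simp
  set D : ℕ → ℝ := fun n => Real.exp (-((n + 1) * η)) * (1 - Real.cos ((n + 1) * y))
    with hDdef
  have hD0 : ∀ n, 0 ≤ D n := by
    intro n
    apply mul_nonneg (Real.exp_pos _).le
    nlinarith [Real.cos_le_one ((n + 1) * y)]
  have hD2 : ∀ n, D n ≤ 2 := by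
    intro n
    have h1 : Real.exp (-((n + 1) * η)) ≤ 1 := by
      rw [Real.exp_le_one_iff]
      have : (0:ℝ) ≤ (n + 1) * η := by positivity
      linarith
    have h2 := Real.neg_one_le_cos ((n + 1 : ℝ) * y)
    have h3 := (Real.exp_pos (-((n + 1 : ℝ) * η))).le
    simp only [hDdef]
    nlinarith
  have htpow : ∀ n : ℕ, t ^ (n + 1) = Real.exp (-((n + 1) * η)) := by
    intro n
    rw [htdef, ← Real.exp_nat_mul]
    congr 1
    push_cast; ring
  have habsw : ∀ n : ℕ, ‖q ^ (n + 1)‖ = t ^ (n + 1) := by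
    intro n; rw [norm_pow, habsq]
  have hwre : ∀ n : ℕ, (q ^ (n + 1)).re = Real.exp (-((n + 1) * η)) * Real.cos ((n + 1) * y) := by
    intro n
    have h1 : q ^ (n + 1) = Complex.exp ((((n : ℕ) + 1 : ℕ) : ℂ) * -z) := by
      rw [Complex.exp_nat_mul, hqdef]
    rw [h1, Complex.exp_re]
    have hre : ((((n : ℕ) + 1 : ℕ) : ℂ) * -z).re = -((n + 1) * η) := by
      push_cast
      simp only [Complex.mul_re, Complex.neg_re, Complex.neg_im, Complex.add_re,
        Complex.add_im, Complex.natCast_re, Complex.natCast_im, Complex.one_re,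
        Complex.one_im, ← hηdef]
      ring
    have him : ((((n : ℕ) + 1 : ℕ) : ℂ) * -z).im = -((n + 1) * y) := by
      push_cast
      simp only [Complex.mul_im, Complex.neg_re, Complex.neg_im, Complex.add_re,
        Complex.add_im, Complex.natCast_re, Complex.natCast_im, Complex.one_re,
        Complex.one_im, ← hydef]
      ring
    rw [hre, him, Real.cos_neg]
  have hFb : ∀ n, ‖F n‖ ≤ b n - D n / 2 := by
    intro n
    have h1 := auxSumBound k hk (w := q ^ (n + 1))
      (by rw [habsw]; exact pow_le_one₀ ht0.le ht1.le)
    rw [habsw] at h1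
    have h3 : t ^ (n + 1) - (q ^ (n + 1)).re = D n := by
      rw [hwre n, hDdef, htpow n]; ring
    rw [h3] at h1
    simpa only [hbdef, hFdef] using h1
  set M := Nat.floor (1 / η) with hMdef
  set δ : ℕ → ℝ := fun n => D n / (2 * k) with hδdef
  have hδ0 : ∀ n, 0 ≤ δ n := fun n => div_nonneg (hD0 n) (by positivity)
  have hδ1 : ∀ n, δ n ≤ 1 / 2 := by
    intro n
    rw [hδdef]
    simp only
    rw [div_le_iff₀ (by positivity)]
    nlinarith [hD2 n, hk0, show (2:ℝ) ≤ k by exact_mod_cast hk]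
  set r : ℕ → ℝ := fun n => if n < M then 1 - δ n else 1 with hrdef
  set g : ℕ → ℝ := fun n => r n * b n with hgdef
  have hr0 : ∀ n, 0 ≤ r n := by
    intro n
    rw [hrdef]
    dsimp only
    split
    · linarith [hδ1 n]
    · norm_num
  have hr1 : ∀ n, r n ≤ 1 := by
    intro n
    rw [hrdef]
    dsimp only
    split
    · linarith [hδ0 n]
    · exact le_refl 1
  have hag : ∀ n, ‖F n‖ ≤ g n := by
    intro n
    rw [hgdef, hrdef]
    dsimp only
    split
    · have h1 : δ n * b n ≤ D n / 2 := by
        rw [hδdef]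
        dsimp only
        rw [div_mul_eq_mul_div, div_le_div_iff₀ (by positivity) two_pos]
        nlinarith [hbk n, hD0 n, hb0 n]
      nlinarith [hFb n, hb0 n]
    · calc ‖F n‖ ≤ b n - D n / 2 := hFb n
        _ ≤ 1 * b n := by nlinarith [hD0 n]
  have hMb : Multipliable b := hMG.norm.congr hGb
  have hMr : Multipliable r := by
    apply multipliable_of_finite_mulSupport
    apply Set.Finite.subset (Set.finite_Iio M)
    intro n hn
    simp only [Function.mem_mulSupport] at hn
    by_contra h
    simp only [Set.mem_Iio, not_lt] at h
    apply hn
    rw [hrdef]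
    simp only
    rw [if_neg (by omega)]
  have hMg : Multipliable g := hMr.mul hMb
  have habsF : Multipliable fun n => ‖F n‖ := hMF.norm
  have htr : ∏' n, r n = ∏ n ∈ Finset.range M, r n := by
    apply tprod_eq_prod
    intro n hn
    rw [hrdef]
    simp only
    rw [if_neg (by simpa using hn)]
  -- lower bound for the sum of the deficiencies
  have hMη : (M : ℝ) * η ≤ 1 := by
    have h1 : (M : ℝ) ≤ 1 / η := Nat.floor_le (by positivity)
    calc (M:ℝ) * η ≤ (1/η) * η := by nlinarith
      _ = 1 := by field_simp
  have hMlb : 1 / η - 1 ≤ (M : ℝ) := by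
    have := Nat.lt_floor_add_one (1/η)
    rw [hMdef]
    linarith
  have hsumδ : 1 / (12 * k) / η ≤ ∑ n ∈ Finset.range M, δ n := by
    have hstep : ∀ n ∈ Finset.range M, (1 - Real.cos ((n+1)*y)) / (6*k) ≤ δ n := by
      intro n hn
      rw [Finset.mem_range] at hn
      have h1 : ((n:ℝ)+1) * η ≤ 1 := by
        have h2 : ((n:ℝ)+1) ≤ M := by exact_mod_cast Nat.succ_le_of_lt hn
        nlinarith
      have h2 : (1:ℝ)/3 ≤ Real.exp (-((n+1)*η)) := by
        rw [Real.exp_neg]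
        have h3 : Real.exp (((n:ℝ)+1)*η) ≤ Real.exp 1 := Real.exp_le_exp.mpr h1
        have h4 : Real.exp 1 < 3 := by
          have := Real.exp_one_lt_d9
          norm_num at this ⊢
          linarith
        have h5 : 0 < Real.exp (((n:ℝ)+1)*η) := Real.exp_pos _
        rw [le_inv_comm₀ (by norm_num) h5]
        linarith
      rw [hδdef, hDdef]
      dsimp only
      have hcos : 0 ≤ 1 - Real.cos ((↑n+1)*y) := by
        nlinarith [Real.cos_le_one ((↑n+1)*y)]
      rw [div_le_div_iff₀ (by positivity) (by positivity)]
      have key : (1/3) * (1 - Real.cos ((↑n+1)*y))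
          ≤ Real.exp (-((↑n+1)*η)) * (1 - Real.cos ((↑n+1)*y)) :=
        mul_le_mul_of_nonneg_right h2 hcos
      have key2 := mul_le_mul_of_nonneg_right key (show (0:ℝ) ≤ 6*↑k by positivity)
      calc (1 - Real.cos ((↑n+1)*y)) * (2*↑k)
          = (1/3) * (1 - Real.cos ((↑n+1)*y)) * (6*↑k) := by ring
        _ ≤ Real.exp (-((↑n+1)*η)) * (1 - Real.cos ((↑n+1)*y)) * (6*↑k) := key2
    have hcs := auxCosSum hy0 hy2 M
    have hsum1 : (M:ℝ) - π/|y| ≤ ∑ n ∈ Finset.range M, (1 - Real.cos ((n+1)*y)) := by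
      rw [Finset.sum_sub_distrib]
      simp only [Finset.sum_const, Finset.card_range, nsmul_eq_mul, mul_one]
      linarith [hcs]
    have hπy : π/|y| ≤ 1/(4*η) := by
      rw [div_le_div_iff₀ habsy (by positivity)]
      nlinarith [hylb]
    have h14 : (1:ℝ) ≤ 1/(4*η) := by
      rw [le_div_iff₀ (by positivity)]
      linarith [hη4]
    have hfin : 1/(2*η) ≤ (M:ℝ) - π/|y| := by
      have h1 : 1/η = 4 * (1/(4*η)) := by field_simp
      have h2 : 1/(2*η) = 2 * (1/(4*η)) := by field_simp; ring
      linarith [hMlb, hπy]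
    calc 1/(12*k)/η = (1/(6*k)) * (1/(2*η)) := by
          field_simp
          ring
      _ ≤ (1/(6*k)) * ((M:ℝ) - π/|y|) := by
          apply mul_le_mul_of_nonneg_left hfin (by positivity)
      _ ≤ (1/(6*k)) * ∑ n ∈ Finset.range M, (1 - Real.cos ((n+1)*y)) := by
          apply mul_le_mul_of_nonneg_left hsum1 (by positivity)
      _ = ∑ n ∈ Finset.range M, (1 - Real.cos ((n+1)*y)) / (6*k) := by
          rw [Finset.mul_sum]
          exact Finset.sum_congr rfl fun n _ => by ring
      _ ≤ ∑ n ∈ Finset.range M, δ n := Finset.sum_le_sum hstep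
  have hprodr : ∏ n ∈ Finset.range M, r n ≤ Real.exp (-(1/(12*k))/η) := by
    have h1 : ∏ n ∈ Finset.range M, r n ≤ ∏ n ∈ Finset.range M, Real.exp (-δ n) := by
      apply Finset.prod_le_prod
      · intro n _; exact hr0 n
      · intro n hn
        rw [hrdef]
        dsimp only
        rw [if_pos (Finset.mem_range.mp hn)]
        linarith [Real.add_one_le_exp (-δ n)]
    rw [← Real.exp_sum] at h1
    apply h1.trans
    apply Real.exp_le_exp.mpr
    rw [Finset.sum_neg_distrib, neg_div, neg_le_neg_iff]
    exact hsumδ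
  have htb : ∏' n, b n = ‖xiK k qr‖ := by
    rw [hxiqr, hMG.norm_tprod, tprod_congr hGb]
  calc ‖xiK k q‖
      = ∏' n, ‖F n‖ := by rw [hxiq, hMF.norm_tprod]
    _ ≤ ∏' n, g n := auxTprodLe (fun n => norm_nonneg _) hag habsF hMg
    _ = (∏' n, r n) * (∏' n, b n) := hMr.tprod_mul hMb
    _ = (∏ n ∈ Finset.range M, r n) * ‖xiK k qr‖ := by rw [htr, htb]
    _ ≤ Real.exp (-(1/(12*k))/η) * ‖xiK k qr‖ := by
        apply mul_le_mul_of_nonneg_right hprodr (norm_nonneg _)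
    _ = 1 * ‖xiK k qr‖ * Real.exp (-(1/(12*k))/η) := by ring
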